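/- arXiv:1502.06299 — 3 statements merged into one kernel-verified Lean document; each statement's English description precedes it below -/
import Mathlib

section
/- Spreading lemma: let (V,μ) be a finite measure space and f1,…,fn : V → ℂ orthonormal in L²(μ). Set F = (f1,…,fn), μ_F(A) = Σ_{u∈A} ||F(u)||² μ(u), and the pseudometric d_F(u,v) = min_{γ∈U(1)} || F(u)/||F(u)|| − γ F(v)/||F(v)|| || on {F ≠ 0}. If S ⊆ V satisfies diam(S ∩ {F≠0}, d_F) ≤ r for some r ∈ (0,1), then μ_F(S) ≤ μ_F(V) / (n(1 − r²)). -/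
open Finset
open scoped InnerProductSpace ComplexConjugate

private lemma inner_conj_expand {V : Type*} [Fintype V] (μ : V → ℝ)
    (n : ℕ) (f : Fin n → V → ℂ)
    (F : V → EuclideanSpace ℂ (Fin n)) (hF : ∀ u p, F u p = f p u)
    (x₀ : EuclideanSpace ℂ (Fin n)) (u : V) :
    ⟪x₀, F u⟫_ℂ * conj ⟪x₀, F u⟫_ℂ * (μ u : ℂ) =
      ∑ i, ∑ j, (conj (x₀ i) * x₀ j) * (f i u * conj (f j u) * (μ u : ℂ)) := by
  simp only [PiLp.inner_apply, RCLike.inner_apply, map_sum, hF]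
  rw [Finset.sum_mul_sum, Finset.sum_mul]
  refine Finset.sum_congr rfl fun i _ => ?_
  rw [Finset.sum_mul]
  refine Finset.sum_congr rfl fun j _ => ?_
  simp only [map_mul, RingHomCompTriple.comp_apply, RingHom.id_apply, Complex.conj_conj]
  ring

private lemma key_sum {V : Type*} [Fintype V] (μ : V → ℝ)
    (n : ℕ) (f : Fin n → V → ℂ)
    (horth : ∀ i j, ∑ u : V, f i u * (starRingEnd ℂ) (f j u) * (μ u : ℂ) =
      if i = j then 1 else 0)
    (F : V → EuclideanSpace ℂ (Fin n)) (hF : ∀ u p, F u p = f p u)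
    (x₀ : EuclideanSpace ℂ (Fin n)) :
    ∑ u : V, ‖⟪x₀, F u⟫_ℂ‖ ^ 2 * μ u = ‖x₀‖ ^ 2 := by
  have hC : ∑ u : V, ⟪x₀, F u⟫_ℂ * conj ⟪x₀, F u⟫_ℂ * (μ u : ℂ)
      = ∑ i, conj (x₀ i) * x₀ i := by
    rw [Finset.sum_congr rfl (fun u _ => inner_conj_expand μ n f F hF x₀ u)]
    rw [Finset.sum_comm]
    refine Finset.sum_congr rfl fun i _ => ?_
    rw [Finset.sum_comm]
    have : ∀ j, ∑ u : V, (conj (x₀ i) * x₀ j) * (f i u * conj (f j u) * (μ u : ℂ))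
        = (conj (x₀ i) * x₀ j) * (if i = j then 1 else 0) := by
      intro j
      rw [← Finset.mul_sum, horth i j]
    rw [Finset.sum_congr rfl fun j _ => this j]
    simp
  have hcast : ((∑ u : V, ‖⟪x₀, F u⟫_ℂ‖ ^ 2 * μ u : ℝ) : ℂ) = ((‖x₀‖ ^ 2 : ℝ) : ℂ) := by
    push_cast
    calc ∑ u : V, (‖⟪x₀, F u⟫_ℂ‖ : ℂ) ^ 2 * (μ u : ℂ)
        = ∑ u : V, ⟪x₀, F u⟫_ℂ * conj ⟪x₀, F u⟫_ℂ * (μ u : ℂ) := by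
          refine Finset.sum_congr rfl fun u _ => ?_
          congr 1
          rw [Complex.mul_conj]
          push_cast [Complex.normSq_eq_norm_sq]
          ring
      _ = ∑ i, conj (x₀ i) * x₀ i := hC
      _ = ∑ i, ((‖x₀ i‖ : ℂ)) ^ 2 := by
          refine Finset.sum_congr rfl fun i _ => ?_
          rw [mul_comm, Complex.mul_conj]
          push_cast [Complex.normSq_eq_norm_sq]
          ring
      _ = (‖x₀‖ : ℂ) ^ 2 := by
          norm_cast
          rw [EuclideanSpace.norm_eq, Real.sq_sqrt (by positivity)]
  exact_mod_cast hcast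

private lemma total_mass {V : Type*} [Fintype V] (μ : V → ℝ)
    (n : ℕ) (f : Fin n → V → ℂ)
    (horth : ∀ i j, ∑ u : V, f i u * (starRingEnd ℂ) (f j u) * (μ u : ℂ) =
      if i = j then 1 else 0)
    (F : V → EuclideanSpace ℂ (Fin n)) (hF : ∀ u p, F u p = f p u) :
    ∑ u : V, ‖F u‖ ^ 2 * μ u = (n : ℝ) := by
  have hcast : ((∑ u : V, ‖F u‖ ^ 2 * μ u : ℝ) : ℂ) = ((n : ℝ) : ℂ) := by
    push_cast
    calc ∑ u : V, (‖F u‖ : ℂ) ^ 2 * (μ u : ℂ)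
        = ∑ u : V, ∑ i, f i u * conj (f i u) * (μ u : ℂ) := by
          refine Finset.sum_congr rfl fun u _ => ?_
          rw [← Finset.sum_mul]
          congr 1
          have : (‖F u‖ : ℂ) ^ 2 = ((‖F u‖ ^ 2 : ℝ) : ℂ) := by push_cast; ring
          rw [this, EuclideanSpace.norm_eq, Real.sq_sqrt (by positivity)]
          push_cast
          refine Finset.sum_congr rfl fun i _ => ?_
          rw [hF u i, Complex.mul_conj]
          push_cast [Complex.normSq_eq_norm_sq]
          ring
      _ = ∑ i, ∑ u : V, f i u * conj (f i u) * (μ u : ℂ) := Finset.sum_comm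
      _ = ∑ _i : Fin n, (1 : ℂ) := by
          refine Finset.sum_congr rfl fun i _ => ?_
          simpa using horth i i
      _ = (n : ℂ) := by simp
  exact_mod_cast hcast

theorem stmt_15 {V : Type*} [Fintype V] (μ : V → ℝ) (hμ : ∀ u, 0 < μ u)
    (n : ℕ) (f : Fin n → V → ℂ)
    (horth : ∀ i j, ∑ u : V, f i u * (starRingEnd ℂ) (f j u) * (μ u : ℂ) =
      if i = j then 1 else 0)
    (F : V → EuclideanSpace ℂ (Fin n)) (hF : ∀ u p, F u p = f p u)
    (dF : V → V → ℝ)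
    (hdF : ∀ u v, dF u v = sInf { x : ℝ | ∃ γ : ℂ, ‖γ‖ = 1 ∧
      x = ‖(‖F u‖ : ℂ)⁻¹ • F u - γ • ((‖F v‖ : ℂ)⁻¹ • F v)‖ })
    (S : Finset V) (r : ℝ) (hr0 : 0 < r) (hr1 : r < 1)
    (hdiam : ∀ u ∈ S, ∀ v ∈ S, F u ≠ 0 → F v ≠ 0 → dF u v ≤ r) :
    ∑ u ∈ S, ‖F u‖ ^ 2 * μ u ≤ (∑ u : V, ‖F u‖ ^ 2 * μ u) / (n * (1 - r ^ 2)) := by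
  have hr2 : 0 < 1 - r ^ 2 := by nlinarith
  by_cases hex : ∃ u₀ ∈ S, F u₀ ≠ 0
  · obtain ⟨u₀, hu₀S, hu₀⟩ := hex
    have hn : 0 < n := by
      rcases Nat.eq_zero_or_pos n with h | h
      · subst h
        exact absurd (Subsingleton.elim (F u₀) 0) hu₀
      · exact h
    set x₀ : EuclideanSpace ℂ (Fin n) := (‖F u₀‖ : ℂ)⁻¹ • F u₀ with hx₀def
    have hFu₀ : ‖F u₀‖ ≠ 0 := norm_ne_zero_iff.mpr hu₀
    have hx₀ : ‖x₀‖ = 1 := by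
      rw [hx₀def, norm_smul]
      simp [abs_of_nonneg (norm_nonneg (F u₀)), inv_mul_cancel₀ hFu₀]
    -- pointwise bound
    have hpt : ∀ u ∈ S, (1 - r ^ 2) * (‖F u‖ ^ 2 * μ u) ≤ ‖⟪x₀, F u⟫_ℂ‖ ^ 2 * μ u := by
      intro u huS
      by_cases hu : F u = 0
      · simp [hu]
      have hFu : ‖F u‖ ≠ 0 := norm_ne_zero_iff.mpr hu
      set xu : EuclideanSpace ℂ (Fin n) := (‖F u‖ : ℂ)⁻¹ • F u with hxudef
      have hxu : ‖xu‖ = 1 := by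
        rw [hxudef, norm_smul]
        simp [abs_of_nonneg (norm_nonneg (F u)), inv_mul_cancel₀ hFu]
      set t : ℝ := ‖⟪x₀, xu⟫_ℂ‖ with htdef
      have ht0 : 0 ≤ t := norm_nonneg _
      -- lower bound on t
      have ht : 1 - r ^ 2 / 2 ≤ t := by
        by_cases h1 : 1 ≤ t
        · nlinarith
        push_neg at h1
        have hdle : dF u₀ u ≤ r := hdiam u₀ hu₀S u huS hu₀ hu
        rw [hdF u₀ u] at hdle
        have hlb : ∀ x ∈ { x : ℝ | ∃ γ : ℂ, ‖γ‖ = 1 ∧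
            x = ‖(‖F u₀‖ : ℂ)⁻¹ • F u₀ - γ • ((‖F u‖ : ℂ)⁻¹ • F u)‖ },
            Real.sqrt (2 - 2 * t) ≤ x := by
          rintro x ⟨γ, hγ, rfl⟩
          have hsq : 2 - 2 * t ≤ ‖x₀ - γ • xu‖ ^ 2 := by
            rw [norm_sub_sq (𝕜 := ℂ)]
            have h1 : ‖γ • xu‖ = 1 := by rw [norm_smul, hγ, hxu]; ring
            have h2 : Complex.re ⟪x₀, γ • xu⟫_ℂ ≤ t := by
              calc Complex.re ⟪x₀, γ • xu⟫_ℂ ≤ ‖⟪x₀, γ • xu⟫_ℂ‖ := Complex.re_le_norm _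
                _ = t := by rw [inner_smul_right, norm_mul, hγ, one_mul]
            rw [hx₀, h1]
            simp only [RCLike.re_to_complex]
            linarith
          calc Real.sqrt (2 - 2 * t) ≤ Real.sqrt (‖x₀ - γ • xu‖ ^ 2) :=
                Real.sqrt_le_sqrt hsq
            _ = ‖x₀ - γ • xu‖ := Real.sqrt_sq (norm_nonneg _)
            _ = ‖(‖F u₀‖ : ℂ)⁻¹ • F u₀ - γ • ((‖F u‖ : ℂ)⁻¹ • F u)‖ := by
                rw [hx₀def, hxudef]
        have hne : { x : ℝ | ∃ γ : ℂ, ‖γ‖ = 1 ∧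
            x = ‖(‖F u₀‖ : ℂ)⁻¹ • F u₀ - γ • ((‖F u‖ : ℂ)⁻¹ • F u)‖ }.Nonempty := by
          exact ⟨_, 1, by simp, rfl⟩
        have h3 : Real.sqrt (2 - 2 * t) ≤ r := le_trans (le_csInf hne hlb) hdle
        have h4 : 2 - 2 * t ≤ r ^ 2 := by
          have h5 : 0 ≤ 2 - 2 * t := by linarith
          nlinarith [Real.sq_sqrt h5, Real.sqrt_nonneg (2 - 2 * t)]
        linarith
      -- from t bound to the inequality
      have hFdecomp : ⟪x₀, F u⟫_ℂ = (‖F u‖ : ℂ) * ⟪x₀, xu⟫_ℂ := by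
        rw [← inner_smul_right]
        congr 1
        rw [hxudef, smul_smul, mul_inv_cancel₀ (by exact_mod_cast hFu), one_smul]
      have hnorm : ‖⟪x₀, F u⟫_ℂ‖ = ‖F u‖ * t := by
        rw [hFdecomp, norm_mul, Complex.norm_real, Real.norm_eq_abs,
          abs_of_nonneg (norm_nonneg _)]
      rw [hnorm]
      have ht2 : 1 - r ^ 2 ≤ t ^ 2 := by nlinarith
      have hμu := (hμ u).le
      nlinarith [sq_nonneg (‖F u‖), mul_nonneg (mul_nonneg (sub_nonneg.mpr ht2) (sq_nonneg (‖F u‖))) hμu]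
    -- sum up
    have hsum : (1 - r ^ 2) * ∑ u ∈ S, ‖F u‖ ^ 2 * μ u ≤ 1 := by
      calc (1 - r ^ 2) * ∑ u ∈ S, ‖F u‖ ^ 2 * μ u
          = ∑ u ∈ S, (1 - r ^ 2) * (‖F u‖ ^ 2 * μ u) := Finset.mul_sum _ _ _
        _ ≤ ∑ u ∈ S, ‖⟪x₀, F u⟫_ℂ‖ ^ 2 * μ u := Finset.sum_le_sum hpt
        _ ≤ ∑ u : V, ‖⟪x₀, F u⟫_ℂ‖ ^ 2 * μ u := by
            refine Finset.sum_le_sum_of_subset_of_nonneg (Finset.subset_univ S)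
              fun u _ _ => ?_
            have := (hμ u).le
            positivity
        _ = ‖x₀‖ ^ 2 := key_sum μ n f horth F hF x₀
        _ = 1 := by rw [hx₀]; norm_num
    rw [total_mass μ n f horth F hF]
    have hnR : (0 : ℝ) < (n : ℝ) := by exact_mod_cast hn
    rw [le_div_iff₀ (mul_pos hnR hr2)]
    nlinarith [mul_le_mul_of_nonneg_left hsum hnR.le]
  · push_neg at hex
    have hz : ∑ u ∈ S, ‖F u‖ ^ 2 * μ u = 0 := by
      refine Finset.sum_eq_zero fun u huS => ?_
      by_cases hu : F u = 0
      · simp [hu]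
      · exact absurd hu (not_not.mpr (hex u huS))
    rw [hz]
    exact div_nonneg (Finset.sum_nonneg fun u _ => mul_nonneg (sq_nonneg _) (hμ u).le)
      (mul_nonneg (Nat.cast_nonneg n) hr2.le)
end

section
/- Localization lemma: let G be a finite weighted graph with U(1)-signature s, F : V → ℂⁿ any map, and for ε > 0 and S ⊆ V let η(u) = 0 if F(u) = 0 and η(u) = max{0, 1 − d_F(u, S ∩ supp F)/ε} otherwise, where d_F(u,v) = min_{γ∈U(1)} ||F(u)/||F(u)|| − γ F(v)/||F(v)||||. Set Ψ = ηF. Then for every edge {u,v}, ||Ψ(u) − s_{uv}Ψ(v)|| ≤ (1 + 1/ε) ||F(u) − s_{uv}F(v)||. -/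
open scoped Classical

section Aux

variable {V : Type*} {n : ℕ}

/-- The set of distances between phase-rotated normalized vectors. -/
def Dset (F : V → EuclideanSpace ℂ (Fin n)) (p q : V) : Set ℝ :=
  { x : ℝ | ∃ γ : ℂ, ‖γ‖ = 1 ∧
      x = ‖(‖F p‖ : ℂ)⁻¹ • F p - γ • ((‖F q‖ : ℂ)⁻¹ • F q)‖ }

noncomputable def uD (F : V → EuclideanSpace ℂ (Fin n)) (p q : V) : ℝ := sInf (Dset F p q)

lemma Dset_bdd (F : V → EuclideanSpace ℂ (Fin n)) (p q : V) : BddBelow (Dset F p q) := by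
  refine ⟨0, ?_⟩
  rintro x ⟨γ, hγ, rfl⟩
  exact norm_nonneg _

lemma Dset_ne (F : V → EuclideanSpace ℂ (Fin n)) (p q : V) : (Dset F p q).Nonempty :=
  ⟨_, 1, norm_one, rfl⟩

lemma uD_nonneg (F : V → EuclideanSpace ℂ (Fin n)) (p q : V) : 0 ≤ uD F p q := by
  refine Real.sInf_nonneg ?_
  rintro x ⟨γ, hγ, rfl⟩
  exact norm_nonneg _

lemma uD_le (F : V → EuclideanSpace ℂ (Fin n)) (p q : V) (γ : ℂ) (hγ : ‖γ‖ = 1) :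
    uD F p q ≤ ‖(‖F p‖ : ℂ)⁻¹ • F p - γ • ((‖F q‖ : ℂ)⁻¹ • F q)‖ :=
  csInf_le (Dset_bdd F p q) ⟨γ, hγ, rfl⟩

lemma uD_symm_le (F : V → EuclideanSpace ℂ (Fin n)) (p q : V) : uD F p q ≤ uD F q p := by
  refine le_csInf (Dset_ne F q p) ?_
  rintro b ⟨γ, hγ, rfl⟩
  have hγ0 : γ ≠ 0 := by
    intro h; rw [h] at hγ; simp at hγ
  have hinv : ‖γ⁻¹‖ = 1 := by rw [norm_inv, hγ]; norm_num
  refine (uD_le F p q γ⁻¹ hinv).trans_eq ?_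
  have e2 : γ • (γ⁻¹ • ((‖F q‖ : ℂ)⁻¹ • F q) - (‖F p‖ : ℂ)⁻¹ • F p)
      = (‖F q‖ : ℂ)⁻¹ • F q - γ • ((‖F p‖ : ℂ)⁻¹ • F p) := by
    rw [smul_sub, smul_smul, mul_inv_cancel₀ hγ0, one_smul]
  calc ‖(‖F p‖ : ℂ)⁻¹ • F p - γ⁻¹ • ((‖F q‖ : ℂ)⁻¹ • F q)‖
      = ‖γ⁻¹ • ((‖F q‖ : ℂ)⁻¹ • F q) - (‖F p‖ : ℂ)⁻¹ • F p‖ := norm_sub_rev _ _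
    _ = ‖γ • (γ⁻¹ • ((‖F q‖ : ℂ)⁻¹ • F q) - (‖F p‖ : ℂ)⁻¹ • F p)‖ := by
        rw [norm_smul, hγ, one_mul]
    _ = ‖(‖F q‖ : ℂ)⁻¹ • F q - γ • ((‖F p‖ : ℂ)⁻¹ • F p)‖ := by rw [e2]

lemma uD_symm (F : V → EuclideanSpace ℂ (Fin n)) (p q : V) : uD F p q = uD F q p :=
  le_antisymm (uD_symm_le F p q) (uD_symm_le F q p)

lemma uD_tri (F : V → EuclideanSpace ℂ (Fin n)) (p q r : V) :
    uD F p r ≤ uD F p q + uD F q r := by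
  have H : ∀ a ∈ Dset F p q, ∀ b ∈ Dset F q r, uD F p r ≤ a + b := by
    rintro a ⟨γ1, hγ1, rfl⟩ b ⟨γ2, hγ2, rfl⟩
    have h12 : ‖γ1 * γ2‖ = 1 := by rw [norm_mul, hγ1, hγ2]; ring
    refine (uD_le F p r (γ1 * γ2) h12).trans ?_
    have e : (‖F p‖ : ℂ)⁻¹ • F p - (γ1 * γ2) • ((‖F r‖ : ℂ)⁻¹ • F r)
        = ((‖F p‖ : ℂ)⁻¹ • F p - γ1 • ((‖F q‖ : ℂ)⁻¹ • F q))
          + γ1 • ((‖F q‖ : ℂ)⁻¹ • F q - γ2 • ((‖F r‖ : ℂ)⁻¹ • F r)) := by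
      rw [smul_sub, mul_smul]
      abel
    rw [e]
    refine (norm_add_le _ _).trans ?_
    rw [norm_smul, hγ1, one_mul]
  have h1 : ∀ b ∈ Dset F q r, uD F p r - b ≤ uD F p q := by
    intro b hb
    refine le_csInf (Dset_ne F p q) fun a ha => ?_
    have := H a ha b hb
    linarith
  have h2 : uD F p r - uD F p q ≤ uD F q r := by
    refine le_csInf (Dset_ne F q r) fun b hb => ?_
    have := h1 b hb
    linarith
  linarith

set_option maxHeartbeats 1000000 in
lemma key_geo {n : ℕ} (a c : EuclideanSpace ℂ (Fin n)) (s : ℂ) (hs : ‖s‖ = 1)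
    (ha : a ≠ 0) (hc : c ≠ 0) :
    ∃ γ : ℂ, ‖γ‖ = 1 ∧
      ‖(‖a‖ : ℂ)⁻¹ • a - γ • ((‖c‖ : ℂ)⁻¹ • c)‖ * min ‖a‖ ‖c‖ ≤ ‖a - s • c‖ := by
  have hna : (0:ℝ) < ‖a‖ := norm_pos_iff.mpr ha
  have hnc : (0:ℝ) < ‖c‖ := norm_pos_iff.mpr hc
  set x : EuclideanSpace ℂ (Fin n) := (‖a‖ : ℂ)⁻¹ • a with hxdef
  set y : EuclideanSpace ℂ (Fin n) := (‖c‖ : ℂ)⁻¹ • c with hydef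
  have hx : ‖x‖ = 1 := by
    rw [hxdef, norm_smul]
    simp [abs_of_pos hna, inv_mul_cancel₀ hna.ne']
  have hy : ‖y‖ = 1 := by
    rw [hydef, norm_smul]
    simp [abs_of_pos hnc, inv_mul_cancel₀ hnc.ne']
  set ci : ℂ := inner ℂ x (s • y) with hcidef
  set t : ℝ := ‖ci‖ with htdef
  have ht0 : 0 ≤ t := norm_nonneg _
  have ht1 : t ≤ 1 := by
    calc t ≤ ‖x‖ * ‖s • y‖ := norm_inner_le_norm x (s • y)
    _ = 1 := by rw [hx, norm_smul, hs, hy]; ring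
  set δ : ℂ := if ci = 0 then 1 else (t : ℂ) / ci with hδdef
  have hδ : ‖δ‖ = 1 := by
    rw [hδdef]
    split_ifs with h
    · simp
    · have htne : t ≠ 0 := norm_ne_zero_iff.mpr h
      rw [norm_div, Complex.norm_real, Real.norm_of_nonneg ht0, ← htdef]
      exact div_self htne
  have hδc : δ * ci = (t : ℂ) := by
    rw [hδdef]
    split_ifs with h
    · simp [h, htdef]
    · field_simp
  refine ⟨δ * s, by rw [norm_mul, hδ, hs]; ring, ?_⟩
  have hre : Complex.re ci ≤ t := Complex.re_le_norm ci
  have hcs : ci = s * inner ℂ x y := by rw [hcidef, inner_smul_right]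
  have h1 : ‖x - (δ * s) • y‖ ^ 2 = 2 - 2 * t := by
    have hi : (inner ℂ x ((δ * s) • y) : ℂ) = (t : ℂ) := by
      rw [inner_smul_right, mul_assoc, ← hcs, hδc]
    have := @norm_sub_sq ℂ _ _ _ _ x ((δ * s) • y)
    simp only [RCLike.re_to_complex] at this
    rw [this, hi, hx, norm_smul, norm_mul, hδ, hs, hy]
    simp
    ring
  have h2 : ‖a‖ ^ 2 + ‖c‖ ^ 2 - 2 * (‖a‖ * ‖c‖ * t) ≤ ‖a - s • c‖ ^ 2 := by
    have hax : (‖a‖ : ℂ) • x = a := by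
      rw [hxdef, smul_smul, mul_inv_cancel₀ (by exact_mod_cast hna.ne'), one_smul]
    have hcy0 : (‖c‖ : ℂ) • y = c := by
      rw [hydef, smul_smul, mul_inv_cancel₀ (by exact_mod_cast hnc.ne'), one_smul]
    have hcy : (‖c‖ : ℂ) • (s • y) = s • c := by rw [smul_comm, hcy0]
    have hi : (inner ℂ a (s • c) : ℂ) = (‖a‖ : ℂ) * ((‖c‖ : ℂ) * ci) := by
      conv_lhs => rw [← hax, ← hcy]
      rw [inner_smul_left, inner_smul_right, ← hcidef, Complex.conj_ofReal]
    have hre2 : Complex.re (inner ℂ a (s • c) : ℂ) ≤ ‖a‖ * ‖c‖ * t := by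
      rw [hi]
      simp only [Complex.mul_re, Complex.ofReal_re, Complex.ofReal_im]
      ring_nf
      nlinarith [mul_le_mul_of_nonneg_left hre (mul_nonneg hna.le hnc.le)]
    have := @norm_sub_sq ℂ _ _ _ _ a (s • c)
    simp only [RCLike.re_to_complex] at this
    rw [this, norm_smul, hs, one_mul]
    nlinarith [hre2]
  have hmn : 0 ≤ min ‖a‖ ‖c‖ := le_min hna.le hnc.le
  have hgoal2 : (‖x - (δ * s) • y‖ * min ‖a‖ ‖c‖) ^ 2 ≤ ‖a - s • c‖ ^ 2 := by
    rw [mul_pow, h1]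
    rcases le_total ‖a‖ ‖c‖ with hle | hle
    · rw [min_eq_left hle]
      have h3 : t * ‖a‖ ≤ ‖a‖ := mul_le_of_le_one_left hna.le ht1
      nlinarith [h2, mul_nonneg (sub_nonneg.mpr hle)
        (by linarith : (0:ℝ) ≤ ‖c‖ + ‖a‖ - 2*(t*‖a‖))]
    · rw [min_eq_right hle]
      have h3 : t * ‖c‖ ≤ ‖c‖ := mul_le_of_le_one_left hnc.le ht1
      nlinarith [h2, mul_nonneg (sub_nonneg.mpr hle)
        (by linarith : (0:ℝ) ≤ ‖a‖ + ‖c‖ - 2*(t*‖c‖))]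
  have hnn : 0 ≤ ‖x - (δ * s) • y‖ * min ‖a‖ ‖c‖ := mul_nonneg (norm_nonneg _) hmn
  exact (pow_le_pow_iff_left₀ hnn (norm_nonneg _) two_ne_zero).mp hgoal2

lemma uD_key (F : V → EuclideanSpace ℂ (Fin n)) (p q : V) (hp : F p ≠ 0) (hq : F q ≠ 0)
    (s : ℂ) (hs : ‖s‖ = 1) :
    uD F p q * min ‖F p‖ ‖F q‖ ≤ ‖F p - s • F q‖ := by
  obtain ⟨γ, hγ, hle⟩ := key_geo (F p) (F q) s hs hp hq
  refine le_trans ?_ hle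
  exact mul_le_mul_of_nonneg_right (uD_le F p q γ hγ)
    (le_min (norm_nonneg _) (norm_nonneg _))

end Aux

set_option maxHeartbeats 1000000 in
theorem stmt_17 {V : Type*} [Fintype V] {n : ℕ} (G : SimpleGraph V) [DecidableRel G.Adj]
    (s : V → V → ℂ) (hs_unit : ∀ u v, G.Adj u v → ‖s u v‖ = 1)
    (F : V → EuclideanSpace ℂ (Fin n))
    (dF : V → V → ℝ)
    (hdF : ∀ u v, dF u v = sInf { x : ℝ | ∃ γ : ℂ, ‖γ‖ = 1 ∧
      x = ‖(‖F u‖ : ℂ)⁻¹ • F u - γ • ((‖F v‖ : ℂ)⁻¹ • F v)‖ })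
    (S : Set V) (ε : ℝ) (hε : 0 < ε)
    (η : V → ℝ)
    (hη : ∀ u, η u = if F u = 0 then 0 else
      max 0 (1 - sInf { x : ℝ | ∃ a, a ∈ S ∧ F a ≠ 0 ∧ x = dF u a } / ε)) :
    ∀ u v, G.Adj u v →
      ‖(η u : ℂ) • F u - s u v • ((η v : ℂ) • F v)‖ ≤
        (1 + 1 / ε) * ‖F u - s u v • F v‖ := by
  intro u v huv
  have hs : ‖s u v‖ = 1 := hs_unit u v huv
  have hdF' : ∀ p q, dF p q = uD F p q := hdF
  have hεinv : (0:ℝ) < 1 / ε := by positivity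
  have hA : (0:ℝ) ≤ ‖F u - s u v • F v‖ := norm_nonneg _
  have hη01 : ∀ w, 0 ≤ η w ∧ η w ≤ 1 := by
    intro w
    rw [hη w]
    split_ifs with h
    · exact ⟨le_rfl, zero_le_one⟩
    refine ⟨le_max_left _ _, max_le zero_le_one ?_⟩
    have hD : 0 ≤ sInf { x : ℝ | ∃ a, a ∈ S ∧ F a ≠ 0 ∧ x = dF w a } := by
      refine Real.sInf_nonneg ?_
      rintro x ⟨a, _, _, rfl⟩
      rw [hdF']
      exact uD_nonneg F w a
    have := div_nonneg hD hε.le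
    linarith
  by_cases hu : F u = 0
  · have hηu : η u = 0 := by rw [hη u]; simp [hu]
    have hL : ‖(η u : ℂ) • F u - s u v • ((η v : ℂ) • F v)‖ = η v * ‖F v‖ := by
      rw [hηu, hu]
      simp [norm_smul, hs, Complex.norm_real, abs_of_nonneg (hη01 v).1]
    have hR : ‖F u - s u v • F v‖ = ‖F v‖ := by
      rw [hu, zero_sub, norm_neg, norm_smul, hs, one_mul]
    rw [hL, hR]
    nlinarith [(hη01 v).2, (hη01 v).1, norm_nonneg (F v)]
  by_cases hv : F v = 0
  · have hηv : η v = 0 := by rw [hη v]; simp [hv]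
    have hL : ‖(η u : ℂ) • F u - s u v • ((η v : ℂ) • F v)‖ = η u * ‖F u‖ := by
      rw [hηv, hv]
      simp [norm_smul, Complex.norm_real, abs_of_nonneg (hη01 u).1]
    have hR : ‖F u - s u v • F v‖ = ‖F u‖ := by
      rw [hv, smul_zero, sub_zero]
    rw [hL, hR]
    nlinarith [(hη01 u).2, (hη01 u).1, norm_nonneg (F u)]
  -- main case
  have hLip : |η u - η v| ≤ dF u v / ε := by
    rw [hη u, hη v, if_neg hu, if_neg hv]
    by_cases hS : ∃ a, a ∈ S ∧ F a ≠ 0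
    · obtain ⟨a0, ha0S, ha0⟩ := hS
      have hne : ∀ w : V, Set.Nonempty { x : ℝ | ∃ a, a ∈ S ∧ F a ≠ 0 ∧ x = dF w a } :=
        fun w => ⟨dF w a0, a0, ha0S, ha0, rfl⟩
      have hbdd : ∀ w : V, BddBelow { x : ℝ | ∃ a, a ∈ S ∧ F a ≠ 0 ∧ x = dF w a } := by
        intro w
        refine ⟨0, ?_⟩
        rintro x ⟨a, _, _, rfl⟩
        rw [hdF']
        exact uD_nonneg F w a
      have key : ∀ p q : V, sInf { x : ℝ | ∃ a, a ∈ S ∧ F a ≠ 0 ∧ x = dF p a } ≤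
          sInf { x : ℝ | ∃ a, a ∈ S ∧ F a ≠ 0 ∧ x = dF q a } + dF p q := by
        intro p q
        rw [← sub_le_iff_le_add]
        refine le_csInf (hne q) ?_
        rintro b ⟨a, haS, haF, rfl⟩
        rw [sub_le_iff_le_add]
        calc sInf { x : ℝ | ∃ a, a ∈ S ∧ F a ≠ 0 ∧ x = dF p a } ≤ dF p a :=
              csInf_le (hbdd p) ⟨a, haS, haF, rfl⟩
          _ ≤ dF p q + dF q a := by
              rw [hdF' p a, hdF' p q, hdF' q a]
              exact uD_tri F p q a
          _ = dF q a + dF p q := by ring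
      have h1 := key u v
      have h2 := key v u
      have hsym : dF v u = dF u v := by rw [hdF', hdF']; exact uD_symm F v u
      rw [hsym] at h2
      set Du := sInf { x : ℝ | ∃ a, a ∈ S ∧ F a ≠ 0 ∧ x = dF u a } with hDu
      set Dv := sInf { x : ℝ | ∃ a, a ∈ S ∧ F a ≠ 0 ∧ x = dF v a } with hDv
      have hd0 : 0 ≤ dF u v := by rw [hdF']; exact uD_nonneg F u v
      calc |max 0 (1 - Du / ε) - max 0 (1 - Dv / ε)|
          ≤ |(1 - Du / ε) - (1 - Dv / ε)| := by
            have := abs_max_sub_max_le_abs (1 - Du / ε) (1 - Dv / ε) 0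
            rwa [max_comm (1 - Du / ε), max_comm (1 - Dv / ε)] at this
        _ = |Dv - Du| / ε := by
            rw [show (1 - Du / ε) - (1 - Dv / ε) = (Dv - Du) / ε by ring,
              abs_div, abs_of_pos hε]
        _ ≤ dF u v / ε := by
            have : |Dv - Du| ≤ dF u v := abs_sub_le_iff.mpr ⟨by linarith, by linarith⟩
            gcongr
    · push_neg at hS
      have hemp : ∀ w : V, { x : ℝ | ∃ a, a ∈ S ∧ F a ≠ 0 ∧ x = dF w a } = (∅ : Set ℝ) := by
        intro w
        ext x
        simp only [Set.mem_setOf_eq, Set.mem_empty_iff_false, iff_false]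
        rintro ⟨a, haS, haF, rfl⟩
        exact haF (hS a haS)
      rw [hemp u, hemp v, sub_self, abs_zero]
      have : 0 ≤ dF u v := by rw [hdF']; exact uD_nonneg F u v
      positivity
  have hkey : dF u v * min ‖F u‖ ‖F v‖ ≤ ‖F u - s u v • F v‖ := by
    rw [hdF']
    exact uD_key F u v hu hv (s u v) hs
  rcases le_total ‖F u‖ ‖F v‖ with hle | hle
  · have hdecomp : (η u : ℂ) • F u - s u v • ((η v : ℂ) • F v)
        = (η v : ℂ) • (F u - s u v • F v) + ((η u : ℂ) - (η v : ℂ)) • F u := by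
      rw [smul_comm (s u v) ((η v : ℂ)) (F v), smul_sub, sub_smul]
      abel
    rw [min_eq_left hle] at hkey
    calc ‖(η u : ℂ) • F u - s u v • ((η v : ℂ) • F v)‖
        = ‖(η v : ℂ) • (F u - s u v • F v) + ((η u : ℂ) - (η v : ℂ)) • F u‖ := by
          rw [hdecomp]
      _ ≤ ‖(η v : ℂ) • (F u - s u v • F v)‖ + ‖((η u : ℂ) - (η v : ℂ)) • F u‖ :=
          norm_add_le _ _
      _ = η v * ‖F u - s u v • F v‖ + |η u - η v| * ‖F u‖ := by
          rw [norm_smul, norm_smul, ← Complex.ofReal_sub, Complex.norm_real,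
            Complex.norm_real, Real.norm_of_nonneg (hη01 v).1, Real.norm_eq_abs]
      _ ≤ (1 + 1 / ε) * ‖F u - s u v • F v‖ := by
          have h6 : |η u - η v| * ‖F u‖ ≤ (dF u v / ε) * ‖F u‖ :=
            mul_le_mul_of_nonneg_right hLip (norm_nonneg _)
          have h7 : η v * ‖F u - s u v • F v‖ ≤ 1 * ‖F u - s u v • F v‖ :=
            mul_le_mul_of_nonneg_right (hη01 v).2 hA
          have h8 : (dF u v / ε) * ‖F u‖ = (dF u v * ‖F u‖) / ε := by ring
          have h9 : (dF u v * ‖F u‖) / ε ≤ ‖F u - s u v • F v‖ / ε := by gcongr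
          have h10 : (1 + 1 / ε) * ‖F u - s u v • F v‖
              = 1 * ‖F u - s u v • F v‖ + ‖F u - s u v • F v‖ / ε := by ring
          linarith
  · have hdecomp : (η u : ℂ) • F u - s u v • ((η v : ℂ) • F v)
        = (η u : ℂ) • (F u - s u v • F v) + ((η u : ℂ) - (η v : ℂ)) • (s u v • F v) := by
      rw [smul_comm (s u v) ((η v : ℂ)) (F v), smul_sub, sub_smul]
      abel
    rw [min_eq_right hle] at hkey
    calc ‖(η u : ℂ) • F u - s u v • ((η v : ℂ) • F v)‖
        = ‖(η u : ℂ) • (F u - s u v • F v) + ((η u : ℂ) - (η v : ℂ)) • (s u v • F v)‖ := by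
          rw [hdecomp]
      _ ≤ ‖(η u : ℂ) • (F u - s u v • F v)‖ + ‖((η u : ℂ) - (η v : ℂ)) • (s u v • F v)‖ :=
          norm_add_le _ _
      _ = η u * ‖F u - s u v • F v‖ + |η u - η v| * ‖F v‖ := by
          rw [norm_smul, norm_smul, ← Complex.ofReal_sub, Complex.norm_real,
            Complex.norm_real, Real.norm_of_nonneg (hη01 u).1, norm_smul, hs, one_mul, Real.norm_eq_abs]
      _ ≤ (1 + 1 / ε) * ‖F u - s u v • F v‖ := by
          have h6 : |η u - η v| * ‖F v‖ ≤ (dF u v / ε) * ‖F v‖ :=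
            mul_le_mul_of_nonneg_right hLip (norm_nonneg _)
          have h7 : η u * ‖F u - s u v • F v‖ ≤ 1 * ‖F u - s u v • F v‖ :=
            mul_le_mul_of_nonneg_right (hη01 u).2 hA
          have h8 : (dF u v / ε) * ‖F v‖ = (dF u v * ‖F v‖) / ε := by ring
          have h9 : (dF u v * ‖F v‖) / ε ≤ ‖F u - s u v • F v‖ / ε := by gcongr
          have h10 : (1 + 1 / ε) * ‖F u - s u v • F v‖
              = 1 * ‖F u - s u v • F v‖ + ‖F u - s u v • F v‖ / ε := by ring
          linarith
end

section
/- Lower bound in the higher-order Cheeger inequality: let G be a finite weighted graph with signature s : E^{or} → U(1), μ : V → ℝ₊, and let h_n^s(μ) be the n-way Cheeger constant, the minimum over all collections of n pairwise disjoint nonempty subsets V1,…,Vn of V of max_p (ι^s(V_p) + |E(V_p, V_p^c)|)/vol_μ(V_p). Then λ_n(Δ_μ^s) ≤ 2 h_n^s(μ), where λ_n is the n-th smallest eigenvalue of the magnetic Laplacian Δ_μ^s. -/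
open Finset

/-- Rayleigh quotient of `f` for the magnetic Laplacian with weights `w`,
vertex measure `μ` and signature `s` (each unordered edge counted once). -/
noncomputable def rayleigh {V : Type*} [Fintype V] (G : SimpleGraph V) [DecidableRel G.Adj]
    (w : V → V → ℝ) (μ : V → ℝ) (s : V → V → ℂ) (f : V → ℂ) : ℝ :=
  ((1 / 2) * ∑ u : V, ∑ v : V, if G.Adj u v then w u v * ‖f u - s u v * f v‖ ^ 2 else 0) /
    (∑ u : V, ‖f u‖ ^ 2 * μ u)

/-- The first eigenvalue of the magnetic Laplacian, characterized by the
variational (min-max) principle as the infimum of Rayleigh quotients. -/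
noncomputable def lam1 {V : Type*} [Fintype V] (G : SimpleGraph V) [DecidableRel G.Adj]
    (w : V → V → ℝ) (μ : V → ℝ) (s : V → V → ℂ) : ℝ :=
  sInf { x : ℝ | ∃ f : V → ℂ, f ≠ 0 ∧ x = rayleigh G w μ s f }

/-- Frustration index of `V1` with `U(1)`-valued switching functions. -/
noncomputable def frusIdx {V : Type*} [Fintype V] (G : SimpleGraph V) [DecidableRel G.Adj]
    (w : V → V → ℝ) (s : V → V → ℂ) (V1 : Finset V) : ℝ :=
  sInf { x : ℝ | ∃ τ : V → ℂ, (∀ u, ‖τ u‖ = 1) ∧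
    x = (1 / 2) * ∑ u ∈ V1, ∑ v ∈ V1, if G.Adj u v then w u v * ‖τ u - s u v * τ v‖ else 0 }

/-- Weighted boundary measure `|E(V1, V1ᶜ)|`. -/
noncomputable def bdry {V : Type*} [Fintype V] [DecidableEq V] (G : SimpleGraph V)
    [DecidableRel G.Adj] (w : V → V → ℝ) (V1 : Finset V) : ℝ :=
  ∑ u ∈ V1, ∑ v ∈ V1ᶜ, if G.Adj u v then w u v else 0

/-- `μ`-volume of `V1`. -/
noncomputable def vol {V : Type*} [Fintype V] (μ : V → ℝ) (V1 : Finset V) : ℝ :=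
  ∑ u ∈ V1, μ u

/-- The Cheeger constant `h₁ˢ(μ)`. -/
noncomputable def cheeger1 {V : Type*} [Fintype V] [DecidableEq V] (G : SimpleGraph V)
    [DecidableRel G.Adj] (w : V → V → ℝ) (μ : V → ℝ) (s : V → V → ℂ) : ℝ :=
  sInf { x : ℝ | ∃ V1 : Finset V, V1.Nonempty ∧
    x = (frusIdx G w s V1 + bdry G w V1) / vol μ V1 }

/-- Maximal `μ`-degree `d_μ`. -/
noncomputable def dmu {V : Type*} [Fintype V] (G : SimpleGraph V) [DecidableRel G.Adj]
    (w : V → V → ℝ) (μ : V → ℝ) : ℝ :=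
  ⨆ u : V, (∑ v : V, if G.Adj u v then w u v else 0) / μ u

theorem stmt_19 {V : Type*} [Fintype V] [DecidableEq V] (G : SimpleGraph V) [DecidableRel G.Adj]
    (w : V → V → ℝ) (μ : V → ℝ) (s : V → V → ℂ)
    (hw_sym : ∀ u v, w u v = w v u)
    (hw_pos : ∀ u v, G.Adj u v → 0 < w u v)
    (hμ : ∀ u, 0 < μ u)
    (hs_unit : ∀ u v, G.Adj u v → ‖s u v‖ = 1)
    (hs_inv : ∀ u v, G.Adj u v → s v u = (s u v)⁻¹)
    (n : ℕ) (hn : 0 < n) (hcard : n ≤ Fintype.card V) :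
    -- the n-th eigenvalue, via the Courant–Fischer min-max principle over
    -- families of n pairwise μ-orthogonal nonzero functions
    sInf { x : ℝ | ∃ f : Fin n → V → ℂ, (∀ p, f p ≠ 0) ∧
        (∀ p q, p ≠ q → ∑ u : V, f p u * (starRingEnd ℂ) (f q u) * (μ u : ℂ) = 0) ∧
        x = sSup { y : ℝ | ∃ g : V → ℂ, g ∈ Submodule.span ℂ (Set.range f) ∧ g ≠ 0 ∧
          y = rayleigh G w μ s g } } ≤
    -- twice the n-way Cheeger constant
    2 * sInf { x : ℝ | ∃ Vs : Fin n → Finset V, (∀ p, (Vs p).Nonempty) ∧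
        (∀ p q, p ≠ q → Disjoint (Vs p) (Vs q)) ∧
        x = sSup { y : ℝ | ∃ p : Fin n,
          y = (frusIdx G w s (Vs p) + bdry G w (Vs p)) / vol μ (Vs p) } } := by
  classical
  set Aset := { x : ℝ | ∃ f : Fin n → V → ℂ, (∀ p, f p ≠ 0) ∧
      (∀ p q, p ≠ q → ∑ u : V, f p u * (starRingEnd ℂ) (f q u) * (μ u : ℂ) = 0) ∧
      x = sSup { y : ℝ | ∃ g : V → ℂ, g ∈ Submodule.span ℂ (Set.range f) ∧ g ≠ 0 ∧
        y = rayleigh G w μ s g } } with hAdef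
  set Bset := { x : ℝ | ∃ Vs : Fin n → Finset V, (∀ p, (Vs p).Nonempty) ∧
      (∀ p q, p ≠ q → Disjoint (Vs p) (Vs q)) ∧
      x = sSup { y : ℝ | ∃ p : Fin n,
        y = (frusIdx G w s (Vs p) + bdry G w (Vs p)) / vol μ (Vs p) } } with hBdef
  -- every element of Aset is nonnegative
  have hA_nonneg : ∀ a ∈ Aset, (0 : ℝ) ≤ a := by
    rintro a ⟨f, hf0, -, rfl⟩
    apply Real.sSup_nonneg
    rintro y ⟨g, -, hg0, rfl⟩
    unfold rayleigh
    apply div_nonneg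
    · apply mul_nonneg (by norm_num)
      apply Finset.sum_nonneg; intro u _
      apply Finset.sum_nonneg; intro v _
      split_ifs with h
      · exact mul_nonneg (hw_pos u v h).le (by positivity)
      · exact le_rfl
    · exact Finset.sum_nonneg fun u _ => mul_nonneg (by positivity) (hμ u).le
  have hAbdd : BddBelow Aset := ⟨0, fun a ha => hA_nonneg a ha⟩
  -- Bset is nonempty
  have hBne : Bset.Nonempty := by
    obtain ⟨e⟩ : Nonempty (Fin n ↪ V) :=
      Function.Embedding.nonempty_of_card_le (by simpa using hcard)
    refine ⟨_, ⟨fun p => {e p}, fun p => ⟨e p, Finset.mem_singleton_self _⟩, ?_, rfl⟩⟩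
    intro p q hpq
    rw [Finset.disjoint_left]
    intro a ha hb
    rw [Finset.mem_singleton] at ha hb
    exact hpq (e.injective (ha.symm.trans hb))
  have key : ∀ x ∈ Bset, sInf Aset ≤ 2 * x := by
    rintro x ⟨Vs, hVne, hVdisj, rfl⟩
    set X := sSup { y : ℝ | ∃ p : Fin n,
        y = (frusIdx G w s (Vs p) + bdry G w (Vs p)) / vol μ (Vs p) } with hXdef
    have hvol : ∀ p, 0 < vol μ (Vs p) := fun p =>
      Finset.sum_pos (fun u _ => hμ u) (hVne p)
    have hfrus_nonneg : ∀ S : Finset V, 0 ≤ frusIdx G w s S := by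
      intro S
      apply Real.sInf_nonneg
      rintro y ⟨τ, hτ, rfl⟩
      apply mul_nonneg (by norm_num)
      apply Finset.sum_nonneg; intro u _
      apply Finset.sum_nonneg; intro v _
      split_ifs with h
      · exact mul_nonneg (hw_pos u v h).le (norm_nonneg _)
      · exact le_rfl
    have hbdry_nonneg : ∀ S : Finset V, 0 ≤ bdry G w S := by
      intro S
      apply Finset.sum_nonneg; intro u _
      apply Finset.sum_nonneg; intro v _
      split_ifs with h
      · exact (hw_pos u v h).le
      · exact le_rfl
    have hrx : ∀ p : Fin n,
        (frusIdx G w s (Vs p) + bdry G w (Vs p)) / vol μ (Vs p) ≤ X := by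
      intro p
      rw [hXdef]
      apply le_csSup
      · apply Set.Finite.bddAbove
        apply Set.Finite.subset (Set.finite_range
          (fun p : Fin n => (frusIdx G w s (Vs p) + bdry G w (Vs p)) / vol μ (Vs p)))
        rintro y ⟨p, rfl⟩; exact ⟨p, rfl⟩
      · exact ⟨p, rfl⟩
    have hX0 : 0 ≤ X := by
      refine le_trans ?_ (hrx ⟨0, hn⟩)
      exact div_nonneg (add_nonneg (hfrus_nonneg _) (hbdry_nonneg _)) (hvol _).le
    apply le_of_forall_pos_le_add
    intro δ hδ
    -- choose near-optimal switching functions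
    have hτex : ∀ p : Fin n, ∃ τ : V → ℂ, (∀ u, ‖τ u‖ = 1) ∧
        (1 / 2) * ∑ u ∈ Vs p, ∑ v ∈ Vs p,
            (if G.Adj u v then w u v * ‖τ u - s u v * τ v‖ else 0)
          < frusIdx G w s (Vs p) + δ / 2 * vol μ (Vs p) := by
      intro p
      have hne' : { x : ℝ | ∃ τ : V → ℂ, (∀ u, ‖τ u‖ = 1) ∧
          x = (1 / 2) * ∑ u ∈ Vs p, ∑ v ∈ Vs p,
            if G.Adj u v then w u v * ‖τ u - s u v * τ v‖ else 0 }.Nonempty :=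
        ⟨_, ⟨fun _ => 1, fun u => by simp, rfl⟩⟩
      have hpos : (0 : ℝ) < δ / 2 * vol μ (Vs p) := mul_pos (by linarith) (hvol p)
      obtain ⟨a, ⟨τ, hτ1, rfl⟩, hlt⟩ :=
        exists_lt_of_csInf_lt hne' (lt_add_of_pos_right (sInf _) hpos)
      exact ⟨τ, hτ1, hlt⟩
    choose τ hτ1 hτ2 using hτex
    set f : Fin n → V → ℂ := fun p u => if u ∈ Vs p then τ p u else 0 with hfdef
    have hf0 : ∀ p, f p ≠ 0 := by
      intro p h
      obtain ⟨u, hu⟩ := hVne p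
      have h1 := congrFun h u
      simp only [hfdef, if_pos hu, Pi.zero_apply] at h1
      have h2 := hτ1 p u
      rw [h1, norm_zero] at h2
      norm_num at h2
    have horth : ∀ p q, p ≠ q →
        ∑ u : V, f p u * (starRingEnd ℂ) (f q u) * (μ u : ℂ) = 0 := by
      intro p q hpq
      apply Finset.sum_eq_zero; intro u _
      by_cases hu : u ∈ Vs p
      · have hq : u ∉ Vs q := Finset.disjoint_left.mp (hVdisj p q hpq) hu
        simp [hfdef, hq]
      · simp [hfdef, hu]
    have hmem : sSup { y : ℝ | ∃ g : V → ℂ, g ∈ Submodule.span ℂ (Set.range f) ∧ g ≠ 0 ∧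
        y = rayleigh G w μ s g } ∈ Aset := by
      rw [hAdef]; exact ⟨f, hf0, horth, rfl⟩
    refine le_trans (csInf_le hAbdd hmem) ?_
    apply Real.sSup_le ?_ (by linarith)
    rintro y ⟨g, hgspan, hg0, rfl⟩
    obtain ⟨c, hc⟩ := (Submodule.mem_span_range_iff_exists_fun ℂ).mp hgspan
    have hg : ∀ u, g u = ∑ p, c p * f p u := by
      intro u
      rw [← hc]
      simp [Finset.sum_apply]
    have hgu : ∀ u (p : Fin n), u ∈ Vs p → g u = c p * τ p u := by
      intro u p hup
      rw [hg, Finset.sum_eq_single p]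
      · simp [hfdef, hup]
      · intro q _ hq
        have : u ∉ Vs q := Finset.disjoint_left.mp (hVdisj p q (Ne.symm hq)) hup
        simp [hfdef, this]
      · intro h; exact absurd (Finset.mem_univ p) h
    have hgu0 : ∀ u, (∀ p : Fin n, u ∉ Vs p) → g u = 0 := by
      intro u hu
      rw [hg]
      apply Finset.sum_eq_zero; intro p _
      simp [hfdef, hu p]
    set Φ : V → V → Fin n → ℝ := fun u v p =>
      if u ∈ Vs p ∧ v ∈ Vs p then 2 * ‖τ p u - s u v * τ p v‖
      else if u ∈ Vs p ∨ v ∈ Vs p then 2 else 0 with hΦdef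
    have hΦnn : ∀ u v p, 0 ≤ Φ u v p := by
      intro u v p
      simp only [hΦdef]
      split_ifs
      · positivity
      · norm_num
      · exact le_rfl
    have hterm_nn : ∀ u v (p : Fin n), 0 ≤ ‖c p‖ ^ 2 * Φ u v p := fun u v p =>
      mul_nonneg (by positivity) (hΦnn u v p)
    have hτnorm : ∀ (p : Fin n) u v, G.Adj u v → ‖τ p u - s u v * τ p v‖ ≤ 2 := by
      intro p u v h
      calc ‖τ p u - s u v * τ p v‖ ≤ ‖τ p u‖ + ‖s u v * τ p v‖ := norm_sub_le _ _
        _ = 2 := by rw [norm_mul, hs_unit u v h, hτ1, hτ1]; norm_num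
    -- pointwise bound on the numerator
    have hpt : ∀ u v, G.Adj u v →
        ‖g u - s u v * g v‖ ^ 2 ≤ ∑ p, ‖c p‖ ^ 2 * Φ u v p := by
      intro u v huv
      by_cases hu : ∃ p, u ∈ Vs p
      · obtain ⟨p, hup⟩ := hu
        by_cases hv : ∃ q, v ∈ Vs q
        · obtain ⟨q, hvq⟩ := hv
          by_cases hpq : p = q
          · subst hpq
            rw [hgu u p hup, hgu v p hvq]
            have heq : c p * τ p u - s u v * (c p * τ p v)
                = c p * (τ p u - s u v * τ p v) := by ring
            rw [heq, norm_mul]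
            have hΦp : Φ u v p = 2 * ‖τ p u - s u v * τ p v‖ := by
              simp [hΦdef, hup, hvq]
            have ht0 : (0:ℝ) ≤ ‖τ p u - s u v * τ p v‖ := norm_nonneg _
            have ht2 := hτnorm p u v huv
            calc (‖c p‖ * ‖τ p u - s u v * τ p v‖) ^ 2
                ≤ ‖c p‖ ^ 2 * (2 * ‖τ p u - s u v * τ p v‖) := by
                  nlinarith [sq_nonneg (‖c p‖), mul_nonneg (sq_nonneg (‖c p‖))
                    (mul_nonneg ht0 (sub_nonneg.mpr ht2))]
              _ = ‖c p‖ ^ 2 * Φ u v p := by rw [hΦp]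
              _ ≤ ∑ i, ‖c i‖ ^ 2 * Φ u v i :=
                  Finset.single_le_sum (fun i _ => hterm_nn u v i) (Finset.mem_univ p)
          · have hvnp : v ∉ Vs p := Finset.disjoint_left.mp (hVdisj q p (Ne.symm hpq)) hvq
            have hunq : u ∉ Vs q := Finset.disjoint_left.mp (hVdisj p q hpq) hup
            rw [hgu u p hup, hgu v q hvq]
            have h1 : ‖c p * τ p u - s u v * (c q * τ q v)‖ ≤ ‖c p‖ + ‖c q‖ := by
              calc ‖c p * τ p u - s u v * (c q * τ q v)‖
                  ≤ ‖c p * τ p u‖ + ‖s u v * (c q * τ q v)‖ := norm_sub_le _ _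
                _ = ‖c p‖ + ‖c q‖ := by
                    rw [norm_mul, norm_mul, norm_mul, hs_unit u v huv, hτ1, hτ1]; ring
            have hΦp : Φ u v p = 2 := by simp [hΦdef, hup, hvnp]
            have hΦq : Φ u v q = 2 := by simp [hΦdef, hunq, hvq]
            have h2 : ‖c p * τ p u - s u v * (c q * τ q v)‖ ^ 2
                ≤ 2 * ‖c p‖ ^ 2 + 2 * ‖c q‖ ^ 2 := by
              nlinarith [norm_nonneg (c p * τ p u - s u v * (c q * τ q v)),
                norm_nonneg (c p), norm_nonneg (c q), sq_nonneg (‖c p‖ - ‖c q‖)]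
            have h3 : ‖c p‖ ^ 2 * Φ u v p + ‖c q‖ ^ 2 * Φ u v q
                ≤ ∑ i, ‖c i‖ ^ 2 * Φ u v i := by
              rw [← Finset.sum_pair (f := fun i => ‖c i‖ ^ 2 * Φ u v i) hpq]
              exact Finset.sum_le_sum_of_subset_of_nonneg (Finset.subset_univ _)
                (fun i _ _ => hterm_nn u v i)
            rw [hΦp, hΦq] at h3
            linarith
        · push_neg at hv
          rw [hgu u p hup, hgu0 v hv]
          have hΦp : Φ u v p = 2 := by simp [hΦdef, hup, hv p]
          calc ‖c p * τ p u - s u v * 0‖ ^ 2 = ‖c p‖ ^ 2 := by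
                rw [mul_zero, sub_zero, norm_mul, hτ1]; ring
            _ ≤ ‖c p‖ ^ 2 * Φ u v p := by rw [hΦp]; nlinarith [sq_nonneg (‖c p‖)]
            _ ≤ ∑ i, ‖c i‖ ^ 2 * Φ u v i :=
                Finset.single_le_sum (fun i _ => hterm_nn u v i) (Finset.mem_univ p)
      · push_neg at hu
        by_cases hv : ∃ q, v ∈ Vs q
        · obtain ⟨q, hvq⟩ := hv
          rw [hgu0 u hu, hgu v q hvq]
          have hΦq : Φ u v q = 2 := by simp [hΦdef, hu q, hvq]
          calc ‖0 - s u v * (c q * τ q v)‖ ^ 2 = ‖c q‖ ^ 2 := by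
                rw [zero_sub, norm_neg, norm_mul, norm_mul, hs_unit u v huv, hτ1]; ring
            _ ≤ ‖c q‖ ^ 2 * Φ u v q := by rw [hΦq]; nlinarith [sq_nonneg (‖c q‖)]
            _ ≤ ∑ i, ‖c i‖ ^ 2 * Φ u v i :=
                Finset.single_le_sum (fun i _ => hterm_nn u v i) (Finset.mem_univ q)
        · push_neg at hv
          rw [hgu0 u hu, hgu0 v hv]
          simp only [mul_zero, sub_zero, norm_zero]
          calc (0:ℝ) ^ 2 = 0 := by norm_num
            _ ≤ ∑ i, ‖c i‖ ^ 2 * Φ u v i :=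
                Finset.sum_nonneg fun i _ => hterm_nn u v i
    -- the per-part sums
    have hperp : ∀ p : Fin n,
        (1 / 2) * ∑ u : V, ∑ v : V, (if G.Adj u v then w u v * Φ u v p else 0)
          = (2 * ((1 / 2) * ∑ u ∈ Vs p, ∑ v ∈ Vs p,
            (if G.Adj u v then w u v * ‖τ p u - s u v * τ p v‖ else 0)) + 2 * bdry G w (Vs p)) := by
      intro p
      have hsplit : ∑ u : V, ∑ v : V, (if G.Adj u v then w u v * Φ u v p else 0)
          = (∑ u ∈ Vs p, ∑ v ∈ Vs p, (if G.Adj u v then w u v * Φ u v p else 0))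
            + (∑ u ∈ Vs p, ∑ v ∈ (Vs p)ᶜ, (if G.Adj u v then w u v * Φ u v p else 0))
            + ((∑ u ∈ (Vs p)ᶜ, ∑ v ∈ Vs p, (if G.Adj u v then w u v * Φ u v p else 0))
            + ∑ u ∈ (Vs p)ᶜ, ∑ v ∈ (Vs p)ᶜ, (if G.Adj u v then w u v * Φ u v p else 0)) := by
        rw [← Finset.sum_add_sum_compl (Vs p)
          (fun u => ∑ v : V, (if G.Adj u v then w u v * Φ u v p else 0))]
        congr 1
        · rw [← Finset.sum_add_distrib]
          exact Finset.sum_congr rfl fun u _ => (Finset.sum_add_sum_compl (Vs p) _).symm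
        · rw [← Finset.sum_add_distrib]
          exact Finset.sum_congr rfl fun u _ => (Finset.sum_add_sum_compl (Vs p) _).symm
      have e1 : ∑ u ∈ Vs p, ∑ v ∈ Vs p, (if G.Adj u v then w u v * Φ u v p else 0)
          = 2 * ∑ u ∈ Vs p, ∑ v ∈ Vs p,
              (if G.Adj u v then w u v * ‖τ p u - s u v * τ p v‖ else 0) := by
        rw [Finset.mul_sum]
        apply Finset.sum_congr rfl; intro u hu
        rw [Finset.mul_sum]
        apply Finset.sum_congr rfl; intro v hv
        have hΦv : Φ u v p = 2 * ‖τ p u - s u v * τ p v‖ := by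
          simp [hΦdef, hu, hv]
        split_ifs with h
        · rw [hΦv]; ring
        · ring
      have e2 : ∑ u ∈ Vs p, ∑ v ∈ (Vs p)ᶜ, (if G.Adj u v then w u v * Φ u v p else 0)
          = 2 * bdry G w (Vs p) := by
        rw [bdry, Finset.mul_sum]
        apply Finset.sum_congr rfl; intro u hu
        rw [Finset.mul_sum]
        apply Finset.sum_congr rfl; intro v hv
        have hvn : v ∉ Vs p := Finset.mem_compl.mp hv
        have hΦv : Φ u v p = 2 := by simp [hΦdef, hu, hvn]
        split_ifs with h
        · rw [hΦv]; ring
        · ring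
      have e3 : ∑ u ∈ (Vs p)ᶜ, ∑ v ∈ Vs p, (if G.Adj u v then w u v * Φ u v p else 0)
          = 2 * bdry G w (Vs p) := by
        rw [bdry, Finset.sum_comm, Finset.mul_sum]
        apply Finset.sum_congr rfl; intro v hv
        rw [Finset.mul_sum]
        apply Finset.sum_congr rfl; intro u hu
        have hun : u ∉ Vs p := Finset.mem_compl.mp hu
        have hΦv : Φ u v p = 2 := by simp [hΦdef, hun, hv]
        have hadj : G.Adj u v ↔ G.Adj v u := G.adj_comm u v
        by_cases h : G.Adj u v
        · rw [if_pos h, if_pos (hadj.mp h), hΦv, hw_sym u v]; ring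
        · rw [if_neg h, if_neg (fun h' => h (hadj.mpr h'))]; ring
      have e4 : ∑ u ∈ (Vs p)ᶜ, ∑ v ∈ (Vs p)ᶜ, (if G.Adj u v then w u v * Φ u v p else 0)
          = 0 := by
        apply Finset.sum_eq_zero; intro u hu
        apply Finset.sum_eq_zero; intro v hv
        have hun : u ∉ Vs p := Finset.mem_compl.mp hu
        have hvn : v ∉ Vs p := Finset.mem_compl.mp hv
        have hΦv : Φ u v p = 0 := by simp [hΦdef, hun, hvn]
        split_ifs with h
        · rw [hΦv]; ring
        · rfl
      rw [hsplit, e1, e2, e3, e4]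
      ring
    -- numerator bound
    have hN : (1 / 2) * ∑ u : V, ∑ v : V,
          (if G.Adj u v then w u v * ‖g u - s u v * g v‖ ^ 2 else 0)
        ≤ ∑ p, ‖c p‖ ^ 2 * (2 * ((1 / 2) * ∑ u ∈ Vs p, ∑ v ∈ Vs p,
            (if G.Adj u v then w u v * ‖τ p u - s u v * τ p v‖ else 0)) + 2 * bdry G w (Vs p)) := by
      have step1 : (1 / 2) * ∑ u : V, ∑ v : V,
            (if G.Adj u v then w u v * ‖g u - s u v * g v‖ ^ 2 else 0)
          ≤ (1 / 2) * ∑ u : V, ∑ v : V, ∑ p,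
            ‖c p‖ ^ 2 * (if G.Adj u v then w u v * Φ u v p else 0) := by
        apply mul_le_mul_of_nonneg_left ?_ (by norm_num)
        apply Finset.sum_le_sum; intro u _
        apply Finset.sum_le_sum; intro v _
        by_cases h : G.Adj u v
        · simp only [if_pos h]
          calc w u v * ‖g u - s u v * g v‖ ^ 2
              ≤ w u v * ∑ p, ‖c p‖ ^ 2 * Φ u v p :=
                mul_le_mul_of_nonneg_left (hpt u v h) (hw_pos u v h).le
            _ = ∑ p, ‖c p‖ ^ 2 * (w u v * Φ u v p) := by
                rw [Finset.mul_sum]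
                exact Finset.sum_congr rfl fun p _ => by ring
        · simp only [if_neg h, mul_zero]
          rw [Finset.sum_const, smul_zero]
      have step2 : (1 / 2) * ∑ u : V, ∑ v : V, ∑ p,
            ‖c p‖ ^ 2 * (if G.Adj u v then w u v * Φ u v p else 0)
          = ∑ p, ‖c p‖ ^ 2 * ((1 / 2) * ∑ u : V, ∑ v : V,
            (if G.Adj u v then w u v * Φ u v p else 0)) := by
        have comm : ∑ u : V, ∑ v : V, ∑ p,
              ‖c p‖ ^ 2 * (if G.Adj u v then w u v * Φ u v p else 0)
            = ∑ p, ∑ u : V, ∑ v : V,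
              ‖c p‖ ^ 2 * (if G.Adj u v then w u v * Φ u v p else 0) := by
          exact (Finset.sum_congr rfl fun u _ => Finset.sum_comm).trans Finset.sum_comm
        rw [comm, Finset.mul_sum]
        apply Finset.sum_congr rfl; intro p _
        have : ∑ u : V, ∑ v : V, ‖c p‖ ^ 2 * (if G.Adj u v then w u v * Φ u v p else 0)
            = ‖c p‖ ^ 2 * ∑ u : V, ∑ v : V, (if G.Adj u v then w u v * Φ u v p else 0) := by
          rw [Finset.mul_sum]
          exact Finset.sum_congr rfl fun u _ => (Finset.mul_sum _ _ _).symm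
        rw [this]
        ring
      calc (1 / 2) * ∑ u : V, ∑ v : V,
            (if G.Adj u v then w u v * ‖g u - s u v * g v‖ ^ 2 else 0)
          ≤ (1 / 2) * ∑ u : V, ∑ v : V, ∑ p,
            ‖c p‖ ^ 2 * (if G.Adj u v then w u v * Φ u v p else 0) := step1
        _ = ∑ p, ‖c p‖ ^ 2 * ((1 / 2) * ∑ u : V, ∑ v : V,
            (if G.Adj u v then w u v * Φ u v p else 0)) := step2
        _ = ∑ p, ‖c p‖ ^ 2 * (2 * ((1 / 2) * ∑ u ∈ Vs p, ∑ v ∈ Vs p,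
            (if G.Adj u v then w u v * ‖τ p u - s u v * τ p v‖ else 0)) + 2 * bdry G w (Vs p)) :=
            Finset.sum_congr rfl fun p _ => by rw [hperp p]
    -- denominator identity
    have hDeq : ∑ u : V, ‖g u‖ ^ 2 * μ u = ∑ p, ‖c p‖ ^ 2 * vol μ (Vs p) := by
      have hptD : ∀ u, ‖g u‖ ^ 2 * μ u
          = ∑ p, ‖c p‖ ^ 2 * (if u ∈ Vs p then μ u else 0) := by
        intro u
        by_cases hu : ∃ p, u ∈ Vs p
        · obtain ⟨p, hup⟩ := hu
          rw [Finset.sum_eq_single p]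
          · rw [hgu u p hup, if_pos hup, norm_mul, hτ1]; ring
          · intro q _ hq
            have : u ∉ Vs q := Finset.disjoint_left.mp (hVdisj p q (Ne.symm hq)) hup
            rw [if_neg this, mul_zero]
          · intro h; exact absurd (Finset.mem_univ p) h
        · push_neg at hu
          rw [hgu0 u hu, norm_zero]
          rw [Finset.sum_eq_zero]
          · ring
          · intro p _; rw [if_neg (hu p), mul_zero]
      rw [Finset.sum_congr rfl fun u _ => hptD u, Finset.sum_comm]
      apply Finset.sum_congr rfl; intro p _
      rw [← Finset.mul_sum, vol, Finset.sum_ite_mem, Finset.univ_inter]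
    have hDpos : 0 < ∑ u : V, ‖g u‖ ^ 2 * μ u := by
      obtain ⟨u0, hu0⟩ := Function.ne_iff.mp hg0
      apply Finset.sum_pos'
      · exact fun u _ => mul_nonneg (by positivity) (hμ u).le
      · exact ⟨u0, Finset.mem_univ u0,
          mul_pos (pow_pos (norm_pos_iff.mpr hu0) 2) (hμ u0)⟩
    -- final bound
    unfold rayleigh
    rw [div_le_iff₀ hDpos]
    calc (1 / 2) * ∑ u : V, ∑ v : V,
          (if G.Adj u v then w u v * ‖g u - s u v * g v‖ ^ 2 else 0)
        ≤ ∑ p, ‖c p‖ ^ 2 * (2 * ((1 / 2) * ∑ u ∈ Vs p, ∑ v ∈ Vs p,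
            (if G.Adj u v then w u v * ‖τ p u - s u v * τ p v‖ else 0)) + 2 * bdry G w (Vs p)) := hN
      _ ≤ ∑ p, ‖c p‖ ^ 2 * ((2 * X + δ) * vol μ (Vs p)) := by
          apply Finset.sum_le_sum; intro p _
          apply mul_le_mul_of_nonneg_left ?_ (by positivity)
          have hb := hτ2 p
          have hxX := hrx p
          rw [div_le_iff₀ (hvol p)] at hxX
          have hexp : (2 * X + δ) * vol μ (Vs p)
              = 2 * (X * vol μ (Vs p)) + δ * vol μ (Vs p) := by ring
          rw [hexp]
          linarith
      _ = (2 * X + δ) * ∑ p, ‖c p‖ ^ 2 * vol μ (Vs p) := by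
          rw [Finset.mul_sum]
          exact Finset.sum_congr rfl fun p _ => by ring
      _ = (2 * X + δ) * ∑ u : V, ‖g u‖ ^ 2 * μ u := by rw [hDeq]
  have h2 : sInf Aset / 2 ≤ sInf Bset := by
    apply le_csInf hBne
    intro b hb
    linarith [key b hb]
  linarith
end
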